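/- Consider the Kirchhoff-stress constitutive law τ(h) = 2μ J(h) h + λ J(h) log J(h) · I on symmetric 3×3 matrices h, where J(h) = det(exp h) = exp(tr h). If μ ≠ 0, the derivative Dτ fails major symmetry: there exist symmetric H, K with tr(Dτ(h)[H] K) ≠ tr(Dτ(h)[K] H) for some h, because Dτ(h)[H] contains the term 2μ J (tr H) h whose pairing gives 2μJ(tr H)tr(hK), not symmetric in (H,K) unless h is a multiple of the identity. Hence Hencky's 1928 model is not hyperelastic. -/

import Mathlib

namespace HenckyAux

noncomputable def ev (i j : Fin 3) : (Fin 3 → Fin 3 → ℝ) →L[ℝ] ℝ :=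
  (ContinuousLinearMap.proj j : (Fin 3 → ℝ) →L[ℝ] ℝ).comp
    (ContinuousLinearMap.proj i : (Fin 3 → Fin 3 → ℝ) →L[ℝ] (Fin 3 → ℝ))

lemma ev_hasFDerivAt (i j : Fin 3) (h : Fin 3 → Fin 3 → ℝ) :
    HasFDerivAt (fun h' : Fin 3 → Fin 3 → ℝ => h' i j) (ev i j) h :=
  (ev i j).hasFDerivAt

noncomputable def Ttr : (Fin 3 → Fin 3 → ℝ) →L[ℝ] ℝ := ∑ a, ev a a

lemma hasFDerivAt_tr (h : Fin 3 → Fin 3 → ℝ) :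
    HasFDerivAt (fun h' : Fin 3 → Fin 3 → ℝ => ∑ a, h' a a) Ttr h :=
  HasFDerivAt.fun_sum fun a _ => ev_hasFDerivAt a a h

noncomputable def D (μ lam : ℝ) (i j : Fin 3) (h : Fin 3 → Fin 3 → ℝ) :
    (Fin 3 → Fin 3 → ℝ) →L[ℝ] ℝ :=
  ((2 * μ * Real.exp (∑ a, h a a)) • ev i j
    + (h i j) • ((2*μ) • (Real.exp (∑ a, h a a) • Ttr)))
  + (if i = j then (1:ℝ) else 0) •
      ((lam * Real.exp (∑ a, h a a)) • Ttr
        + (∑ a, h a a) • (lam • (Real.exp (∑ a, h a a) • Ttr)))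

lemma comp_hasFDerivAt (μ lam : ℝ) (i j : Fin 3) (h : Fin 3 → Fin 3 → ℝ) :
    HasFDerivAt (fun h' : Fin 3 → Fin 3 → ℝ =>
        2 * μ * Real.exp (∑ a, h' a a) * h' i j
          + lam * Real.exp (∑ a, h' a a) * Real.log (Real.exp (∑ a, h' a a)) *
            (if i = j then (1 : ℝ) else 0)) (D μ lam i j h) h := by
  simp only [Real.log_exp]
  have htr := hasFDerivAt_tr h
  exact (((htr.exp.const_mul (2*μ)).mul (ev_hasFDerivAt i j h)).add
    (((htr.exp.const_mul lam).mul htr).mul_const _))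

lemma fderiv_eval (μ lam : ℝ) (h H : Fin 3 → Fin 3 → ℝ) (i j : Fin 3) :
    (fderiv ℝ (fun h' : Fin 3 → Fin 3 → ℝ => fun i j =>
        2 * μ * Real.exp (∑ a, h' a a) * h' i j
          + lam * Real.exp (∑ a, h' a a) * Real.log (Real.exp (∑ a, h' a a)) *
            (if i = j then (1 : ℝ) else 0)) h H) i j = D μ lam i j h H := by
  rw [fderiv_pi (fun i => differentiableAt_pi.mpr fun j =>
        (comp_hasFDerivAt μ lam i j h).differentiableAt)]
  simp only [ContinuousLinearMap.pi_apply]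
  rw [fderiv_pi (fun j => (comp_hasFDerivAt μ lam i j h).differentiableAt)]
  simp only [ContinuousLinearMap.pi_apply, (comp_hasFDerivAt μ lam i j h).fderiv]

end HenckyAux

/-- Hencky's 1928 model `τ(h) = 2μ J(h) h + λ J(h) log J(h) · I`, with
`J(h) = det(exp h) = exp(tr h)` on symmetric 3×3 logarithmic strains `h`, is not
hyperelastic when `μ ≠ 0`: the derivative `Dτ` fails the major (trace-pairing)
symmetry at some symmetric `h` against some symmetric `H`, `K`. -/
theorem hencky_model_not_hyperelastic (μ lam : ℝ) (hμ : μ ≠ 0) :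
    ∃ h H K : Fin 3 → Fin 3 → ℝ,
      (∀ i j, h i j = h j i) ∧ (∀ i j, H i j = H j i) ∧ (∀ i j, K i j = K j i) ∧
      (∑ i, ∑ j,
          (fderiv ℝ (fun h' : Fin 3 → Fin 3 → ℝ => fun i j =>
            2 * μ * Real.exp (∑ a, h' a a) * h' i j
              + lam * Real.exp (∑ a, h' a a) * Real.log (Real.exp (∑ a, h' a a)) *
                (if i = j then (1 : ℝ) else 0)) h H) i j * K j i)
        ≠ (∑ i, ∑ j,
          (fderiv ℝ (fun h' : Fin 3 → Fin 3 → ℝ => fun i j =>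
            2 * μ * Real.exp (∑ a, h' a a) * h' i j
              + lam * Real.exp (∑ a, h' a a) * Real.log (Real.exp (∑ a, h' a a)) *
                (if i = j then (1 : ℝ) else 0)) h K) i j * H j i) := by
  refine ⟨fun i j => if i = 0 ∧ j = 0 then 1 else 0,
    fun i j => if i = j then 1 else 0,
    fun i j => if i = 0 ∧ j = 0 then 1 else 0,
    (fun i j => by simp [and_comm]), (fun i j => by simp [eq_comm]),
    (fun i j => by simp [and_comm]), ?_⟩
  simp only [HenckyAux.fderiv_eval]
  simp only [HenckyAux.D, HenckyAux.Ttr, HenckyAux.ev, ContinuousLinearMap.add_apply, ContinuousLinearMap.smul_apply,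
    ContinuousLinearMap.sum_apply, ContinuousLinearMap.comp_apply,
    ContinuousLinearMap.proj_apply, smul_eq_mul, Fin.sum_univ_three]
  norm_num [Fin.ext_iff]
  ring_nf
  intro hc
  have h0 : μ * Real.exp 1 = 0 := by linarith
  rcases mul_eq_zero.mp h0 with h | h
  · exact hμ h
  · exact (Real.exp_ne_zero 1) h
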